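/- arXiv:2305.17319 — 8 statements merged into one kernel-verified Lean document; each statement's English description precedes it below -/
import Mathlib

section
/- Let θ_i and θ_j be unit vectors in ℝ². Then the μ-probability of the set of t ∈ [0, 2π] such that sign(⟪θ_i, v(t)⟫) = sign(⟪θ_j, v(t)⟫) equals (π − arccos(⟪θ_i, θ_j⟫))/π. -/
open Real MeasureTheory

/-- The unit direction vector `(cos t, sin t)` in the Euclidean plane. -/
noncomputable def v (t : ℝ) : EuclideanSpace ℝ (Fin 2) :=
  (WithLp.equiv 2 (Fin 2 → ℝ)).symm ![Real.cos t, Real.sin t]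

/-- The uniform probability measure on `[0, 2π]`. -/
noncomputable def μunif : Measure ℝ :=
  (ENNReal.ofReal (2 * Real.pi)⁻¹) • (volume.restrict (Set.Icc 0 (2 * Real.pi)))

lemma measurable_realSign : Measurable Real.sign := by
  unfold Real.sign
  refine Measurable.ite measurableSet_Iio measurable_const ?_
  exact Measurable.ite (measurableSet_lt measurable_const measurable_id) measurable_const
    measurable_const

lemma cos_neg_of (s : ℝ) (h1 : π/2 < s) (h2 : s < 3*π/2) : Real.cos s < 0 := by
  have := Real.cos_pos_of_mem_Ioo (show s - π ∈ Set.Ioo (-(π/2)) (π/2) by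
    constructor <;> linarith)
  have hc : Real.cos (s - π) = - Real.cos s := by
    rw [Real.cos_sub, Real.cos_pi, Real.sin_pi]; ring
  linarith [hc ▸ this]

lemma key (a d : ℝ) (hd0 : 0 ≤ d) (hdπ : d ≤ π) :
    volume {t : ℝ | t ∈ Set.Icc (0:ℝ) (2*π) ∧
      Real.sign (Real.cos (t - a)) = Real.sign (Real.cos (t - a - d))} =
    ENNReal.ofReal (2*(π - d)) := by
  have hπ := Real.pi_pos
  set A : Set ℝ := {s | Real.sign (Real.cos s) = Real.sign (Real.cos (s - d))} with hAdef
  have hA : MeasurableSet A := by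
    exact measurableSet_eq_fun (measurable_realSign.comp Real.measurable_cos)
      (measurable_realSign.comp (Real.measurable_cos.comp (measurable_id.sub_const d)))
  -- step 1: the set is a translate of A ∩ Icc (-a) (2π - a)
  have hset : {t : ℝ | t ∈ Set.Icc (0:ℝ) (2*π) ∧
      Real.sign (Real.cos (t - a)) = Real.sign (Real.cos (t - a - d))}
      = (fun t => t + (-a)) ⁻¹' (A ∩ Set.Icc (-a) (2*π - a)) := by
    ext t
    simp only [Set.mem_setOf_eq, Set.mem_preimage, Set.mem_inter_iff, Set.mem_Icc, hAdef]
    constructor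
    · rintro ⟨⟨h1, h2⟩, h3⟩
      refine ⟨?_, by linarith, by linarith⟩
      simpa [sub_eq_add_neg, sub_sub] using h3
    · rintro ⟨h3, h1, h2⟩
      refine ⟨⟨by linarith, by linarith⟩, ?_⟩
      simpa [sub_eq_add_neg, sub_sub] using h3
  rw [hset, measure_preimage_add_right]
  -- step 2: Icc to Ioc
  have hIccIoc : ∀ x y : ℝ, volume (A ∩ Set.Icc x y) = volume (A ∩ Set.Ioc x y) := by
    intro x y
    apply le_antisymm
    · have hsub : A ∩ Set.Icc x y ⊆ (A ∩ Set.Ioc x y) ∪ {x} := by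
        rintro t ⟨ht, h1, h2⟩
        rcases eq_or_lt_of_le h1 with h | h
        · exact Or.inr (by simp [← h])
        · exact Or.inl ⟨ht, h, h2⟩
      calc volume (A ∩ Set.Icc x y) ≤ volume ((A ∩ Set.Ioc x y) ∪ {x}) := measure_mono hsub
        _ ≤ volume (A ∩ Set.Ioc x y) + volume ({x} : Set ℝ) := measure_union_le _ _
        _ = volume (A ∩ Set.Ioc x y) := by simp
    · exact measure_mono (Set.inter_subset_inter_right _ Set.Ioc_subset_Icc_self)
  rw [hIccIoc]
  -- step 3: periodicity, move the window to (d - π/2, d + 3π/2]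
  set g : ℝ → ℝ := A.indicator 1 with hgdef
  have hmem : ∀ s : ℝ, s + 2*π ∈ A ↔ s ∈ A := by
    intro s
    have h1 : Real.cos (s + 2*π) = Real.cos s := Real.cos_add_two_pi s
    have h2 : Real.cos (s + 2*π - d) = Real.cos (s - d) := by
      rw [show s + 2*π - d = (s - d) + 2*π by ring, Real.cos_add_two_pi]
    simp [hAdef, h1, h2]
  have hper : Function.Periodic g (2*π) := by
    intro s
    by_cases h : s ∈ A
    · simp [hgdef, Set.indicator_of_mem ((hmem s).mpr h), Set.indicator_of_mem h]
    · rw [hgdef, Set.indicator_of_notMem (fun hc => h ((hmem s).mp hc)),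
        Set.indicator_of_notMem h]
  have hvol : ∀ x : ℝ, (volume (A ∩ Set.Ioc x (x + 2*π))).toReal
      = ∫ s in x..(x + 2*π), g s := by
    intro x
    rw [intervalIntegral.integral_of_le (by linarith), hgdef,
      MeasureTheory.integral_indicator_one hA, measureReal_def, Measure.restrict_apply hA]
  have hfin : ∀ x : ℝ, volume (A ∩ Set.Ioc x (x + 2*π)) ≠ ⊤ := by
    intro x
    refine ne_top_of_le_ne_top ?_ (measure_mono Set.inter_subset_right)
    rw [Real.volume_Ioc]
    exact ENNReal.ofReal_ne_top
  have hshift : volume (A ∩ Set.Ioc (-a) (-a + 2*π))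
      = volume (A ∩ Set.Ioc (d - π/2) ((d - π/2) + 2*π)) := by
    rw [← ENNReal.toReal_eq_toReal_iff' (hfin _) (hfin _), hvol, hvol]
    exact hper.intervalIntegral_add_eq (-a) (d - π/2)
  rw [show (2*π - a) = -a + 2*π by ring, hshift]
  -- step 4: identify the set up to a finite set
  set U : Set ℝ := Set.Ioo (d - π/2) (π/2) ∪ Set.Ioo (d + π/2) (3*π/2) with hUdef
  set Z : Set ℝ := {π/2, d + π/2, 3*π/2, d + 3*π/2} with hZdef
  have hZ0 : volume Z = 0 := (Set.toFinite Z).measure_zero volume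
  have hI : (d - π/2) + 2*π = d + 3*π/2 := by ring
  have main : ∀ s, s ∈ Set.Ioc (d - π/2) (d + 3*π/2) → s ∉ Z → (s ∈ A ↔ s ∈ U) := by
    intro s hs hz
    obtain ⟨hs1, hs2⟩ := hs
    simp only [hZdef, Set.mem_insert_iff, Set.mem_singleton_iff, not_or] at hz
    obtain ⟨hz1, hz2, hz3, hz4⟩ := hz
    have hs2' : s < d + 3*π/2 := lt_of_le_of_ne hs2 hz4
    rcases lt_trichotomy s (π/2) with h1 | h1 | h1
    · -- both positive
      have hc1 : 0 < Real.cos s := Real.cos_pos_of_mem_Ioo ⟨by linarith, h1⟩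
      have hc2 : 0 < Real.cos (s - d) := Real.cos_pos_of_mem_Ioo ⟨by linarith, by linarith⟩
      refine iff_of_true ?_ (Or.inl ⟨hs1, h1⟩)
      show Real.sign _ = Real.sign _
      rw [Real.sign_of_pos hc1, Real.sign_of_pos hc2]
    · exact absurd h1 hz1
    · rcases lt_trichotomy s (d + π/2) with h2 | h2 | h2
      · -- cos s < 0, cos (s - d) > 0 : disagree
        have hc1 : Real.cos s < 0 := cos_neg_of s h1 (by linarith)
        have hc2 : 0 < Real.cos (s - d) := Real.cos_pos_of_mem_Ioo ⟨by linarith, by linarith⟩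
        refine iff_of_false ?_ ?_
        · show ¬ Real.sign _ = Real.sign _
          rw [Real.sign_of_neg hc1, Real.sign_of_pos hc2]; norm_num
        · rintro (⟨_, h⟩ | ⟨h, _⟩) <;> linarith
      · exact absurd h2 hz2
      · rcases lt_trichotomy s (3*π/2) with h3 | h3 | h3
        · -- both negative
          have hc1 : Real.cos s < 0 := cos_neg_of s h1 h3
          have hc2 : Real.cos (s - d) < 0 := cos_neg_of (s - d) (by linarith) (by linarith)
          refine iff_of_true ?_ (Or.inr ⟨h2, h3⟩)
          show Real.sign _ = Real.sign _
          rw [Real.sign_of_neg hc1, Real.sign_of_neg hc2]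
        · exact absurd h3 hz3
        · -- cos s > 0, cos (s - d) < 0 : disagree
          have hc1 : 0 < Real.cos s := by
            have : 0 < Real.cos (s - 2*π) :=
              Real.cos_pos_of_mem_Ioo ⟨by linarith, by linarith⟩
            rwa [Real.cos_sub_two_pi] at this
          have hc2 : Real.cos (s - d) < 0 := cos_neg_of (s - d) (by linarith) (by linarith)
          refine iff_of_false ?_ ?_
          · show ¬ Real.sign _ = Real.sign _
            rw [Real.sign_of_pos hc1, Real.sign_of_neg hc2]; norm_num
          · rintro (⟨_, h⟩ | ⟨_, h⟩) <;> linarith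
  have hUsub : U ⊆ Set.Ioc (d - π/2) (d + 3*π/2) := by
    rintro s (⟨h1, h2⟩ | ⟨h1, h2⟩) <;> exact ⟨by linarith, by linarith⟩
  have hsetseq : (A ∩ Set.Ioc (d - π/2) (d + 3*π/2)) \ Z = U \ Z := by
    ext s
    constructor
    · rintro ⟨⟨hsA, hsI⟩, hsZ⟩
      exact ⟨(main s hsI hsZ).mp hsA, hsZ⟩
    · rintro ⟨hsU, hsZ⟩
      exact ⟨⟨(main s (hUsub hsU) hsZ).mpr hsU, hUsub hsU⟩, hsZ⟩
  rw [hI, ← measure_diff_null hZ0, hsetseq, measure_diff_null hZ0]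
  -- step 5: compute volume U
  have hdisj : Disjoint (Set.Ioo (d - π/2) (π/2)) (Set.Ioo (d + π/2) (3*π/2)) := by
    rw [Set.disjoint_left]
    rintro s ⟨_, h1⟩ ⟨h2, _⟩
    linarith
  rw [hUdef, measure_union hdisj measurableSet_Ioo, Real.volume_Ioo, Real.volume_Ioo,
    ← ENNReal.ofReal_add (by linarith) (by linarith)]
  congr 1
  ring

lemma key' (a d : ℝ) (hd0 : 0 ≤ d) (hdπ : d ≤ π) :
    μunif {t : ℝ | t ∈ Set.Icc (0:ℝ) (2*π) ∧
      Real.sign (Real.cos (t - a)) = Real.sign (Real.cos (t - a - d))} =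
    ENNReal.ofReal ((2*π)⁻¹) * ENNReal.ofReal (2*(π - d)) := by
  have hS : MeasurableSet {t : ℝ | t ∈ Set.Icc (0:ℝ) (2*π) ∧
      Real.sign (Real.cos (t - a)) = Real.sign (Real.cos (t - a - d))} :=
    measurableSet_Icc.inter (measurableSet_eq_fun
      (measurable_realSign.comp (Real.measurable_cos.comp (measurable_id.sub_const a)))
      (measurable_realSign.comp
        (Real.measurable_cos.comp ((measurable_id.sub_const a).sub_const d))))
  rw [μunif, Measure.smul_apply, Measure.restrict_apply hS,
    Set.inter_eq_self_of_subset_left (fun t ht => ht.1), key a d hd0 hdπ, smul_eq_mul]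

lemma exists_angle (θ : EuclideanSpace ℝ (Fin 2)) (h : ‖θ‖ = 1) : ∃ a, θ = v a := by
  have h2 : θ 0 ^ 2 + θ 1 ^ 2 = 1 := by
    have hθ := h
    rw [EuclideanSpace.norm_eq] at hθ
    have h2' : (θ 0)^2 + (θ 1)^2 = 1 := by
      have h' := congrArg (· ^ 2) hθ
      simpa [Fin.sum_univ_two, Real.sq_sqrt, sq_abs, add_nonneg, sq_nonneg,
        Real.sq_sqrt (by positivity : (0:ℝ) ≤ ‖θ 0‖^2 + ‖θ 1‖^2)] using h'
    exact h2'
  set z : ℂ := ⟨θ 0, θ 1⟩ with hz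
  have hzne : z ≠ 0 := by
    intro h0
    rw [Complex.ext_iff] at h0
    simp [hz] at h0
    rw [h0.1, h0.2] at h2; norm_num at h2
  have habs : ‖z‖ = 1 := by
    rw [Complex.norm_def, Complex.normSq_apply]
    show Real.sqrt (z.re * z.re + z.im * z.im) = 1
    rw [show z.re * z.re + z.im * z.im = 1 by simp [hz]; nlinarith]
    exact Real.sqrt_one
  refine ⟨z.arg, ?_⟩
  have hc := Complex.cos_arg hzne
  have hs := Complex.sin_arg z
  rw [habs] at hc hs
  simp at hc hs
  ext i
  fin_cases i <;> simp [v, WithLp.equiv_symm_apply, PiLp.toLp_apply] <;> simp [hz] at hc hs <;>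
    simp [hz, hc, hs]

lemma inner_v (a t : ℝ) : (inner ℝ (v a) (v t) : ℝ) = Real.cos (t - a) := by
  simp [v, PiLp.inner_apply, Fin.sum_univ_two, WithLp.equiv_symm_apply, PiLp.toLp_apply, Real.cos_sub]

/-- Proposition 1: the level of agreement between two unit preference vectors equals
`(π − arccos⟪θᵢ, θⱼ⟫)/π`. -/
theorem stmt_0 (θi θj : EuclideanSpace ℝ (Fin 2)) (hi : ‖θi‖ = 1) (hj : ‖θj‖ = 1) :
    μunif {t ∈ Set.Icc (0 : ℝ) (2 * Real.pi) |
        Real.sign (inner ℝ θi (v t) : ℝ) = Real.sign (inner ℝ θj (v t) : ℝ)} =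
      ENNReal.ofReal ((Real.pi - Real.arccos (inner ℝ θi θj : ℝ)) / Real.pi) := by
  have hπ := Real.pi_pos
  obtain ⟨a, rfl⟩ := exists_angle θi hi
  obtain ⟨b, rfl⟩ := exists_angle θj hj
  have hij : (inner ℝ (v a) (v b) : ℝ) = Real.cos (b - a) := inner_v a b
  set d : ℝ := Real.arccos (Real.cos (b - a)) with hddef
  have hd0 : 0 ≤ d := Real.arccos_nonneg _
  have hdπ : d ≤ π := Real.arccos_le_pi _
  have hcosd : Real.cos d = Real.cos (b - a) :=
    Real.cos_arccos (Real.neg_one_le_cos _) (Real.cos_le_one _)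
  have hsq : (Real.sin (b - a) - Real.sin d) * (Real.sin (b - a) + Real.sin d) = 0 := by
    have h1 := Real.sin_sq_add_cos_sq (b - a)
    have h2 := Real.sin_sq_add_cos_sq d
    have h3 : Real.cos (b - a) ^ 2 = Real.cos d ^ 2 := by rw [hcosd]
    nlinarith [h1, h2, h3]
  have hrhs : ENNReal.ofReal ((π - Real.arccos (inner ℝ (v a) (v b) : ℝ)) / π)
      = ENNReal.ofReal ((2*π)⁻¹) * ENNReal.ofReal (2*(π - d)) := by
    rw [hij, ← hddef, ← ENNReal.ofReal_mul (by positivity)]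
    congr 1
    field_simp
  rw [hrhs]
  rcases mul_eq_zero.mp hsq with hsin | hsin
  · -- sin (b - a) = sin d, so cos (t - b) = cos (t - a - d)
    have hsin' : Real.sin (b - a) = Real.sin d := by linarith
    have hcos : ∀ t : ℝ, Real.cos (t - b) = Real.cos (t - a - d) := by
      intro t
      have e1 : Real.cos (t - b)
          = Real.cos (t-a) * Real.cos (b-a) + Real.sin (t-a) * Real.sin (b-a) := by
        rw [show t - b = (t - a) - (b - a) by ring]; exact Real.cos_sub _ _
      have e2 : Real.cos (t - a - d)
          = Real.cos (t-a) * Real.cos d + Real.sin (t-a) * Real.sin d := Real.cos_sub _ _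
      rw [e1, e2, ← hcosd, hsin']
    have hseteq : {t ∈ Set.Icc (0:ℝ) (2*π) |
          Real.sign (inner ℝ (v a) (v t) : ℝ) = Real.sign (inner ℝ (v b) (v t) : ℝ)}
        = {t : ℝ | t ∈ Set.Icc (0:ℝ) (2*π) ∧
          Real.sign (Real.cos (t - a)) = Real.sign (Real.cos (t - a - d))} := by
      ext t
      simp only [Set.mem_setOf_eq, inner_v, hcos t]
    rw [hseteq, key' a d hd0 hdπ]
  · -- sin (b - a) = -sin d, so cos (t - b) = cos (t - (a - d))
    have hsin' : Real.sin (b - a) = -Real.sin d := by linarith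
    have hcos : ∀ t : ℝ, Real.cos (t - b) = Real.cos (t - (a - d)) := by
      intro t
      have e1 : Real.cos (t - b)
          = Real.cos (t-a) * Real.cos (b-a) + Real.sin (t-a) * Real.sin (b-a) := by
        rw [show t - b = (t - a) - (b - a) by ring]; exact Real.cos_sub _ _
      have e2 : Real.cos (t - (a - d))
          = Real.cos (t-a) * Real.cos d - Real.sin (t-a) * Real.sin d := by
        rw [show t - (a - d) = (t - a) + d by ring]; exact Real.cos_add _ _
      rw [e1, e2, ← hcosd, hsin']
      ring
    have hseteq : {t ∈ Set.Icc (0:ℝ) (2*π) |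
          Real.sign (inner ℝ (v a) (v t) : ℝ) = Real.sign (inner ℝ (v b) (v t) : ℝ)}
        = {t : ℝ | t ∈ Set.Icc (0:ℝ) (2*π) ∧
          Real.sign (Real.cos (t - (a - d))) = Real.sign (Real.cos (t - (a - d) - d))} := by
      ext t
      simp only [Set.mem_setOf_eq, inner_v, hcos t]
      rw [show t - (a - d) - d = t - a by ring]
      exact and_congr_right fun _ => eq_comm
    rw [hseteq, key' (a - d) d hd0 hdπ]
end

section
/- Let θ*_A and θ*_D be unit vectors in ℝ² with θ*_A ≠ θ*_D, let 0 < α < 1/2, and let θ_C = θ_C(θ*_A, θ*_D) be the aggregate of the truthfully reported vectors. Then arccos(⟪θ_C, θ*_A⟫) < α · arccos(⟪θ*_D, θ*_A⟫); that is, the fraction of disputed cases where the minority prevails, arccos(⟪θ_C, θ*_A⟫)/arccos(⟪θ*_D, θ*_A⟫), is strictly less than the minority's population share α. -/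
open Real

/-- The aggregate vector `(α θ_D + (1−α) θ_A)/‖α θ_D + (1−α) θ_A‖`. -/
noncomputable def aggregate (α : ℝ) (θA θD : EuclideanSpace ℝ (Fin 2)) :
    EuclideanSpace ℝ (Fin 2) :=
  (‖α • θD + (1 - α) • θA‖)⁻¹ • (α • θD + (1 - α) • θA)

/-- Key scalar inequality: from strict concavity of `sin` on `[0, π]`. -/
lemma key_sin (α φ : ℝ) (hα : 0 < α) (hα' : α < 1 / 2) (hφ : 0 < φ) (hφπ : φ ≤ π) :
    α * Real.sin ((1 - α) * φ) < (1 - α) * Real.sin (α * φ) := by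
  have h1α : (0:ℝ) < 1 - α := by linarith
  have hb0 : 0 < (1 - α) * φ := by positivity
  have hbπ : (1 - α) * φ ≤ π := by nlinarith
  have hw : α * φ = (1 - α / (1 - α)) • (0:ℝ) + (α / (1 - α)) • ((1 - α) * φ) := by
    field_simp
    simp only [smul_eq_mul, mul_zero, zero_add]
    rw [div_mul_eq_mul_div, eq_div_iff h1α.ne']; ring
  have hw1 : 0 < 1 - α / (1 - α) := by
    rw [sub_pos, div_lt_one h1α]; linarith
  have hw2 : 0 < α / (1 - α) := by positivity
  have := strictConcaveOn_sin_Icc.2 (x := 0) (y := (1 - α) * φ)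
    (by simp [Real.pi_pos.le]) (by constructor <;> linarith) hb0.ne
    hw1 hw2 (by ring)
  rw [← hw] at this
  simp only [smul_eq_mul, Real.sin_zero, mul_zero, zero_add] at this
  have h2 : (1 - α) * (α / (1 - α) * Real.sin ((1 - α) * φ)) <
      (1 - α) * Real.sin (α * φ) := (mul_lt_mul_iff_right₀ h1α).2 this
  calc α * Real.sin ((1 - α) * φ)
      = (1 - α) * (α / (1 - α) * Real.sin ((1 - α) * φ)) := by field_simp
    _ < (1 - α) * Real.sin (α * φ) := h2

/-- Pure-real core of the theorem. -/
lemma core (α t s x r : ℝ) (hα : 0 < α) (hα' : α < 1 / 2)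
    (htge : -1 ≤ t) (htlt : t < 1) (hs0 : 0 ≤ s) (hs2 : s ^ 2 = 1 - t ^ 2)
    (hx : x = 1 - α + α * t) (hr0 : 0 < r) (hr2 : r ^ 2 = x ^ 2 + α ^ 2 * s ^ 2) :
    Real.arccos (r⁻¹ * x) < α * Real.arccos t := by
  have htle : t ≤ 1 := htlt.le
  set φ : ℝ := Real.arccos t with hφdef
  have hφpos : 0 < φ := Real.arccos_pos.mpr htlt
  have hφπ : φ ≤ π := Real.arccos_le_pi t
  have hcosφ : Real.cos φ = t := Real.cos_arccos htge htle
  have hsinφ : Real.sin φ = s := by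
    rw [hφdef, Real.sin_arccos, ← hs2, Real.sqrt_sq hs0]
  have hxpos : 0 < x := by nlinarith
  set c : ℝ := r⁻¹ * x with hc
  have hcpos : 0 < c := mul_pos (inv_pos.mpr hr0) hxpos
  have hcle : c ≤ 1 := by
    rw [hc, inv_mul_le_iff₀ hr0]
    nlinarith [sq_nonneg s, sq_nonneg (r - x)]
  set a : ℝ := α * φ with ha
  have ha0 : 0 < a := by positivity
  have haπ2 : a < π / 2 := by
    have := Real.pi_pos
    nlinarith
  have hcos_a : 0 < Real.cos a := Real.cos_pos_of_mem_Ioo ⟨by linarith, haπ2⟩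
  have hsin_a : 0 < Real.sin a := Real.sin_pos_of_pos_of_lt_pi ha0 (by linarith [Real.pi_pos])
  have hkey : α * Real.sin ((1 - α) * φ) < (1 - α) * Real.sin a :=
    key_sin α φ hα hα' hφpos hφπ
  have hmain : α * s * Real.cos a < x * Real.sin a := by
    have hsub : Real.sin (φ - a) = Real.sin φ * Real.cos a - Real.cos φ * Real.sin a :=
      Real.sin_sub φ a
    have hφa : φ - a = (1 - α) * φ := by rw [ha]; ring
    have hid : Real.sin ((1 - α) * φ) = s * Real.cos a - t * Real.sin a := by
      rw [← hφa, hsub, hsinφ, hcosφ]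
    nlinarith [hkey, hid]
  have hαs0 : 0 ≤ α * s * Real.cos a := by positivity
  have hsq : (r * Real.cos a) ^ 2 < x ^ 2 := by
    have hpyth : Real.sin a ^ 2 + Real.cos a ^ 2 = 1 := Real.sin_sq_add_cos_sq a
    have hs1 : (α * s * Real.cos a) * (α * s * Real.cos a) <
        (x * Real.sin a) * (x * Real.sin a) := mul_self_lt_mul_self hαs0 hmain
    have hs1' : (α * s * Real.cos a) ^ 2 < (x * Real.sin a) ^ 2 := by
      rw [sq, sq]; exact hs1
    have e1 : (r * Real.cos a) ^ 2 = x ^ 2 * Real.cos a ^ 2 + (α * s * Real.cos a) ^ 2 := by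
      linear_combination (Real.cos a) ^ 2 * hr2
    have e2 : x ^ 2 * Real.cos a ^ 2 + (x * Real.sin a) ^ 2 = x ^ 2 := by
      linear_combination x ^ 2 * hpyth
    linarith
  have hrca : r * Real.cos a < x := by
    nlinarith [mul_pos hr0 hcos_a, hxpos, hsq]
  have hcosac : Real.cos a < c := by
    rw [hc, ← div_eq_inv_mul, lt_div_iff₀ hr0, mul_comm]
    exact hrca
  have harc : Real.arccos c < a := by
    by_contra h
    push_neg at h
    have hmono : Real.cos (Real.arccos c) ≤ Real.cos a :=
      Real.cos_le_cos_of_nonneg_of_le_pi (by linarith) (Real.arccos_le_pi c) h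
    rw [Real.cos_arccos (by linarith) hcle] at hmono
    linarith
  rwa [ha, hφdef] at harc

/-- Finding (a): under truthful reporting, the fraction of disputed cases where the minority
prevails, `arccos⟪θ_C, θ*_A⟫ / arccos⟪θ*_D, θ*_A⟫`, is strictly less than `α`. -/
theorem stmt_2 (α : ℝ) (hα : 0 < α) (hα' : α < 1 / 2)
    (θAstar θDstar : EuclideanSpace ℝ (Fin 2))
    (hA : ‖θAstar‖ = 1) (hD : ‖θDstar‖ = 1) (hne : θAstar ≠ θDstar) :
    Real.arccos (inner ℝ (aggregate α θAstar θDstar) θAstar : ℝ) <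
      α * Real.arccos (inner ℝ θDstar θAstar : ℝ) := by
  have h1α : (0:ℝ) < 1 - α := by linarith
  obtain ⟨t, ht⟩ : ∃ t : ℝ, (inner ℝ θDstar θAstar : ℝ) = t := ⟨_, rfl⟩
  have htabs : |t| ≤ 1 := by
    have := abs_real_inner_le_norm θDstar θAstar
    rwa [hA, hD, one_mul, ht] at this
  have htge : -1 ≤ t := (abs_le.1 htabs).1
  have htle : t ≤ 1 := (abs_le.1 htabs).2
  have htlt : t < 1 := by
    rcases lt_or_eq_of_le htle with h | h
    · exact h
    · exfalso
      apply hne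
      have hsub : ‖θAstar - θDstar‖ ^ 2 = 0 := by
        rw [norm_sub_sq_real, hA, hD]
        have h2 : (inner ℝ θAstar θDstar : ℝ) = t := by
          rw [real_inner_comm, ht]
        rw [h2, h]; ring
      have h3 := pow_eq_zero_iff (n := 2) (by norm_num) |>.1 hsub
      rw [norm_eq_zero, sub_eq_zero] at h3
      exact h3
  obtain ⟨x, hx⟩ : ∃ x : ℝ, x = 1 - α + α * t := ⟨_, rfl⟩
  obtain ⟨s, hs⟩ : ∃ s : ℝ, s = Real.sqrt (1 - t ^ 2) := ⟨_, rfl⟩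
  have hs0 : 0 ≤ s := hs ▸ Real.sqrt_nonneg _
  have hs2 : s ^ 2 = 1 - t ^ 2 := by
    rw [hs]; exact Real.sq_sqrt (by nlinarith)
  obtain ⟨r, hr⟩ : ∃ r : ℝ, r = ‖α • θDstar + (1 - α) • θAstar‖ := ⟨_, rfl⟩
  have hr2 : r ^ 2 = x ^ 2 + α ^ 2 * s ^ 2 := by
    rw [hr, norm_add_sq_real, norm_smul, norm_smul, hA, hD]
    have h1 : (inner ℝ (α • θDstar) ((1 - α) • θAstar) : ℝ) = α * (1 - α) * t := by
      rw [real_inner_smul_left, real_inner_smul_right, ht]; ring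
    rw [h1]
    simp only [Real.norm_eq_abs, abs_of_pos hα, abs_of_pos h1α]
    rw [hs2, hx]; ring
  have hxpos : 0 < x := by nlinarith
  have hr0 : 0 < r := by
    have hrnn : 0 ≤ r := hr ▸ norm_nonneg _
    by_contra h
    push_neg at h
    nlinarith [sq_nonneg s]
  have hcval : (inner ℝ (aggregate α θAstar θDstar) θAstar : ℝ) = r⁻¹ * x := by
    rw [aggregate, real_inner_smul_left, inner_add_left, real_inner_smul_left,
      real_inner_smul_left, ht, real_inner_self_eq_norm_sq, hA, ← hr, hx]
    ring
  rw [hcval, ht]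
  exact core α t s x r hα hα' htge htlt hs0 hs2 hx hr0 hr2
end

section
/- Let 0 < α < 1/2 and let θ_D and θ*_A be unit vectors in ℝ². Set c = ⟪θ_D, θ*_A⟫ and define θ_A = ([α c + √(α² c² − 2α + 1)] θ*_A − α θ_D)/(1 − α). Then ‖θ_A‖ = 1 and θ_C(θ_A, θ_D) = θ*_A; in particular, for any fixed reported vector θ_D of the minority, the majority can report a unit vector making the aggregate equal to its true preference vector θ*_A. -/
open Real

/-- Lemma 1: for any reported minority vector `θ_D`, the majority can report the unit vector
of Equation 2 so that the aggregate equals its true preference vector `θ*_A`. -/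
theorem stmt_4 (α : ℝ) (hα : 0 < α) (hα' : α < 1 / 2)
    (θD θAstar : EuclideanSpace ℝ (Fin 2)) (hD : ‖θD‖ = 1) (hAstar : ‖θAstar‖ = 1) :
    ‖(1 - α)⁻¹ •
        ((α * (inner ℝ θD θAstar : ℝ) +
            Real.sqrt (α ^ 2 * (inner ℝ θD θAstar : ℝ) ^ 2 - 2 * α + 1)) • θAstar
          - α • θD)‖ = 1 ∧
    aggregate α
        ((1 - α)⁻¹ •
          ((α * (inner ℝ θD θAstar : ℝ) +
              Real.sqrt (α ^ 2 * (inner ℝ θD θAstar : ℝ) ^ 2 - 2 * α + 1)) • θAstar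
            - α • θD))
        θD = θAstar := by
  set c : ℝ := (inner ℝ θD θAstar : ℝ) with hc
  have h2α : 0 < 1 - 2 * α := by linarith
  have h1α : 0 < 1 - α := by linarith
  have hpos : 0 ≤ α ^ 2 * c ^ 2 - 2 * α + 1 := by nlinarith [sq_nonneg (α * c)]
  set s := Real.sqrt (α ^ 2 * c ^ 2 - 2 * α + 1) with hs
  have hs2 : s ^ 2 = α ^ 2 * c ^ 2 - 2 * α + 1 := Real.sq_sqrt hpos
  have hsnn : 0 ≤ s := Real.sqrt_nonneg _
  have hβpos : 0 < α * c + s := by nlinarith [sq_nonneg (s + α * c)]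
  set β := α * c + s with hβ
  set v := β • θAstar - α • θD with hv
  have hinner : (inner ℝ v v : ℝ) = (1 - α) ^ 2 := by
    have hsym : (inner ℝ θAstar θD : ℝ) = c := by rw [real_inner_comm]
    have hAA : (inner ℝ θAstar θAstar : ℝ) = 1 := by
      rw [real_inner_self_eq_norm_sq, hAstar]; norm_num
    have hDD : (inner ℝ θD θD : ℝ) = 1 := by
      rw [real_inner_self_eq_norm_sq, hD]; norm_num
    simp only [hv, inner_sub_left, inner_sub_right, real_inner_smul_left,
      real_inner_smul_right, hsym, hAA, hDD, ← hc]
    nlinarith [hs2]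
  have hnv : ‖v‖ = 1 - α := by
    have h := real_inner_self_eq_norm_sq v
    nlinarith [norm_nonneg v, hinner]
  have hnorm1 : ‖(1 - α)⁻¹ • v‖ = 1 := by
    rw [norm_smul, hnv, Real.norm_eq_abs, abs_of_pos (inv_pos.mpr h1α)]
    field_simp
  have hcomb : α • θD + (1 - α) • ((1 - α)⁻¹ • v) = β • θAstar := by
    rw [smul_smul, mul_inv_cancel₀ h1α.ne', one_smul, hv]
    abel
  refine ⟨hnorm1, ?_⟩
  rw [aggregate, hcomb, norm_smul, hAstar, Real.norm_eq_abs, abs_of_pos hβpos]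
  rw [mul_one, smul_smul, inv_mul_cancel₀ hβpos.ne', one_smul]
end

section
/- Let 0 < α < 1/2 and let θ_A and θ_D be unit vectors in ℝ², with aggregate θ_C = θ_C(θ_A, θ_D). Then arccos(⟪θ_C, θ_A⟫) ≤ arcsin(α/(1−α)). -/
open Real

/-- Lemma 2 (inequality): the angle between the aggregate and the majority's reported vector
is at most `arcsin(α/(1−α))`. -/
theorem stmt_5 (α : ℝ) (hα : 0 < α) (hα' : α < 1 / 2)
    (θA θD : EuclideanSpace ℝ (Fin 2)) (hA : ‖θA‖ = 1) (hD : ‖θD‖ = 1) :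
    Real.arccos (inner ℝ (aggregate α θA θD) θA : ℝ) ≤ Real.arcsin (α / (1 - α)) := by
  have hα1 : (0:ℝ) < 1 - α := by linarith
  set t : ℝ := inner ℝ θD θA with ht
  have ht1 : t ≤ 1 := by
    have := real_inner_le_norm θD θD
    have h := real_inner_le_norm θD θA
    simpa [hA, hD, ht] using h
  have ht2 : -1 ≤ t := by
    have h := real_inner_le_norm (-θD) θA
    simp only [inner_neg_left, norm_neg, hA, hD, one_mul] at h
    rw [← ht] at h
    linarith
  set v : EuclideanSpace ℝ (Fin 2) := α • θD + (1 - α) • θA with hv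
  have hip : (inner ℝ v θA : ℝ) = α * t + (1 - α) := by
    rw [hv, inner_add_left, real_inner_smul_left, real_inner_smul_left,
      real_inner_self_eq_norm_sq, hA, ← ht]
    ring
  have hns : ‖v‖ ^ 2 = α ^ 2 + (1 - α) ^ 2 + 2 * (α * (1 - α) * t) := by
    rw [hv, norm_add_sq_real]
    rw [norm_smul, norm_smul, real_inner_smul_left, real_inner_smul_right]
    rw [hA, hD, ← ht]
    rw [Real.norm_eq_abs, Real.norm_eq_abs, abs_of_pos hα, abs_of_pos hα1]
    ring
  have h2α : (0:ℝ) < 1 - 2 * α := by linarith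
  have hn2 : 0 < ‖v‖ ^ 2 := by
    nlinarith [mul_nonneg (le_of_lt (mul_pos hα hα1)) (show (0:ℝ) ≤ t + 1 by linarith),
      mul_pos h2α h2α]
  have hvpos : 0 < ‖v‖ := by
    have := norm_nonneg v
    nlinarith
  have hnum : 0 < α * t + (1 - α) := by nlinarith
  set c : ℝ := inner ℝ (aggregate α θA θD) θA with hc
  have hceq : c = ‖v‖⁻¹ * (α * t + (1 - α)) := by
    rw [hc, aggregate, ← hv, real_inner_smul_left, hip]
  set y : ℝ := α / (1 - α) with hy
  have hy0 : 0 ≤ y := by positivity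
  have hy1 : y ≤ 1 := by
    rw [hy, div_le_one hα1]; linarith
  -- key inequality : (1 - y^2) * ‖v‖^2 ≤ (α*t + (1-α))^2
  have hkey : (1 - y ^ 2) * ‖v‖ ^ 2 ≤ (α * t + (1 - α)) ^ 2 := by
    have hy2 : 1 - y ^ 2 = (1 - 2 * α) / (1 - α) ^ 2 := by
      rw [hy]; field_simp; ring
    rw [hy2, div_mul_eq_mul_div, div_le_iff₀ (by positivity)]
    rw [hns]
    nlinarith [mul_nonneg (sq_nonneg α) (sq_nonneg ((1 - α) * t + α))]
  have hc0 : 0 ≤ c := by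
    rw [hceq]; positivity
  have hc2 : 1 - y ^ 2 ≤ c ^ 2 := by
    rw [hceq, mul_pow, inv_pow]
    rw [← le_div_iff₀ hn2, div_eq_inv_mul] at hkey
    exact hkey
  have hcos : Real.cos (Real.arcsin y) ≤ c := by
    rw [Real.cos_arcsin]
    calc Real.sqrt (1 - y ^ 2) ≤ Real.sqrt (c ^ 2) := Real.sqrt_le_sqrt hc2
      _ = c := by rw [Real.sqrt_sq hc0]
  have hmono := Real.monotone_arcsin hcos
  have h3 : Real.arcsin (Real.cos (Real.arcsin y)) = Real.pi / 2 - Real.arcsin y := by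
    rw [← Real.sin_pi_div_two_sub]
    exact Real.arcsin_sin
      (by linarith [Real.arcsin_le_pi_div_two y, Real.pi_pos])
      (by linarith [Real.arcsin_nonneg.mpr hy0])
  rw [Real.arccos_eq_pi_div_two_sub_arcsin]
  linarith
end

section
/- Let 0 < α < 1/2 and let θ_A and θ_D be unit vectors in ℝ², with aggregate θ_C = θ_C(θ_A, θ_D). Then arccos(⟪θ_C, θ_A⟫) = arcsin(α/(1−α)) if and only if ⟪θ_D, θ_C⟫ = 0. -/
open Real

lemma key_real (α t N : ℝ) (hα : 0 < α) (hα' : α < 1/2) (ht1 : t ≤ 1) (ht2 : -1 ≤ t)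
    (hN2 : N^2 = α^2 + (1-α)^2 + 2*α*(1-α)*t) (hN : 0 < N) :
    Real.arccos (N⁻¹ * (α * t + (1 - α))) = Real.arcsin (α / (1 - α)) ↔
      N⁻¹ * (α + (1 - α) * t) = 0 := by
  have hαl : (0:ℝ) < 1 - α := by linarith
  have h2α : (0:ℝ) < 1 - 2*α := by linarith
  set x : ℝ := N⁻¹ * (α * t + (1 - α)) with hxdef
  have hs0 : (0:ℝ) ≤ α / (1 - α) := div_nonneg hα.le hαl.le
  have hx2 : x^2 ≤ 1 := by
    rw [hxdef, mul_pow, inv_pow, inv_mul_le_iff₀ (by positivity)]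
    have h1t : (0:ℝ) ≤ 1 - t^2 := by nlinarith
    nlinarith [mul_nonneg (mul_nonneg hα.le hα.le) h1t]
  have hxub : x ≤ 1 := by nlinarith
  have hxlb : -1 ≤ x := by nlinarith
  set r : ℝ := Real.sqrt (1 - 2*α) with hrdef
  have hr2 : r^2 = 1 - 2*α := Real.sq_sqrt h2α.le
  have hr0 : 0 < r := Real.sqrt_pos.mpr h2α
  have hcos : Real.cos (Real.arcsin (α / (1 - α))) = r / (1 - α) := by
    rw [Real.cos_arcsin]
    have h1 : 1 - (α / (1-α))^2 = (1-2*α)/(1-α)^2 := by field_simp; ring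
    rw [h1, Real.sqrt_div h2α.le, Real.sqrt_sq hαl.le, hrdef]
  have hiff : Real.arccos x = Real.arcsin (α / (1 - α)) ↔ x = r / (1 - α) := by
    constructor
    · intro h
      have := congrArg Real.cos h
      rwa [Real.cos_arccos hxlb hxub, hcos] at this
    · intro h
      rw [← hcos] at h
      rw [h, Real.arccos_cos (Real.arcsin_nonneg.mpr hs0)
        (le_trans (Real.arcsin_le_pi_div_two _) (by linarith [Real.pi_pos]))]
  rw [hiff]
  constructor
  · intro h
    have heq : (1 - α) * (α * t + (1 - α)) = N * r := by
      rw [hxdef] at h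
      field_simp at h
      linarith
    have heq2 : ((1-α)*(α*t+(1-α)))^2 = N^2*r^2 := by rw [heq, mul_pow]
    have hsq : α^2 * ((1-α)*t + α)^2 = 0 := by
      linear_combination heq2 + r^2 * hN2 + (α^2+(1-α)^2+2*α*(1-α)*t) * hr2
    have h0 : (1-α)*t + α = 0 := by
      have := (mul_eq_zero.mp hsq).resolve_left (by positivity)
      exact pow_eq_zero_iff (by norm_num) |>.mp this
    have : α + (1-α)*t = 0 := by linarith
    rw [this, mul_zero]
  · intro h
    have ht : (1-α)*t = -α := by
      have hne : (N⁻¹ : ℝ) ≠ 0 := by positivity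
      have := (mul_eq_zero.mp h).resolve_left hne
      linarith
    have hNr : N = r := by
      rw [hrdef, ← Real.sqrt_sq hN.le]
      congr 1
      linear_combination hN2 + 2*α*ht
    have hnum : α * t + (1 - α) = r^2 / (1-α) := by
      rw [hr2, eq_div_iff hαl.ne']
      linear_combination α * ht
    rw [hxdef, hNr, hnum, pow_two, mul_div_assoc, ← mul_assoc,
      inv_mul_cancel₀ hr0.ne', one_mul]

/-- Lemma 2 (equality condition): the angular pull of the minority is maximal, i.e.
`arccos⟪θ_C, θ_A⟫ = arcsin(α/(1−α))`, if and only if `θ_D ⊥ θ_C`. -/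
theorem stmt_6 (α : ℝ) (hα : 0 < α) (hα' : α < 1 / 2)
    (θA θD : EuclideanSpace ℝ (Fin 2)) (hA : ‖θA‖ = 1) (hD : ‖θD‖ = 1) :
    Real.arccos (inner ℝ (aggregate α θA θD) θA : ℝ) = Real.arcsin (α / (1 - α)) ↔
      (inner ℝ θD (aggregate α θA θD) : ℝ) = 0 := by
  have hαl : (0:ℝ) < 1 - α := by linarith
  set t : ℝ := inner ℝ θD θA with htdef
  have ht1 : t ≤ 1 := by
    have h := real_inner_le_norm θD θA
    rw [hA, hD, ← htdef] at h; linarith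
  have ht2 : -1 ≤ t := by
    have h := abs_real_inner_le_norm θD θA
    rw [hA, hD, ← htdef] at h
    have := abs_le.mp (by linarith [h] : |t| ≤ 1)
    exact this.1
  set v := α • θD + (1 - α) • θA with hv
  have hivA : (inner ℝ v θA : ℝ) = α * t + (1 - α) := by
    rw [hv, inner_add_left, real_inner_smul_left, real_inner_smul_left,
      real_inner_self_eq_norm_sq, hA, ← htdef]
    ring
  have hivD : (inner ℝ θD v : ℝ) = α + (1 - α) * t := by
    rw [hv, inner_add_right, real_inner_smul_right, real_inner_smul_right,
      real_inner_self_eq_norm_sq, hD, ← htdef]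
    ring
  have hN2 : ‖v‖^2 = α^2 + (1-α)^2 + 2*α*(1-α)*t := by
    rw [hv, norm_add_sq_real, real_inner_smul_left, real_inner_smul_right,
      norm_smul, norm_smul, hA, hD, ← htdef]
    simp [abs_of_pos hα, abs_of_pos hαl]
    ring
  have hNpos : 0 < ‖v‖ := by
    have h1 : (1-2*α)^2 ≤ ‖v‖^2 := by
      rw [hN2]
      nlinarith [mul_nonneg (mul_nonneg hα.le hαl.le) (by linarith : (0:ℝ) ≤ t + 1)]
    nlinarith [norm_nonneg v, sq_nonneg (1-2*α)]
  have hagg : aggregate α θA θD = ‖v‖⁻¹ • v := by rw [aggregate, ← hv]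
  have hCA : (inner ℝ (aggregate α θA θD) θA : ℝ) = ‖v‖⁻¹ * (α * t + (1 - α)) := by
    rw [hagg, real_inner_smul_left, hivA]
  have hDC : (inner ℝ θD (aggregate α θA θD) : ℝ) = ‖v‖⁻¹ * (α + (1 - α) * t) := by
    rw [hagg, real_inner_smul_right, hivD]
  rw [hCA, hDC]
  exact key_real α t ‖v‖ hα hα' ht1 ht2 hN2 hNpos
end

section
/- Let 0 < α < 1/2 and let θ_A and θ_D be unit vectors in ℝ², with aggregate θ_C = θ_C(θ_A, θ_D). Then (1 − α) · sin(arccos(⟪θ_C, θ_A⟫)) = α · sin(arccos(⟪θ_C, θ_D⟫)). -/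
open Real

/-- Appendix E Law-of-Sines relation:
`(1 − α) · sin ∠(θ_C, θ_A) = α · sin ∠(θ_C, θ_D)`. -/
theorem stmt_7 (α : ℝ) (hα : 0 < α) (hα' : α < 1 / 2)
    (θA θD : EuclideanSpace ℝ (Fin 2)) (hA : ‖θA‖ = 1) (hD : ‖θD‖ = 1) :
    (1 - α) * Real.sin (Real.arccos (inner ℝ (aggregate α θA θD) θA : ℝ)) =
      α * Real.sin (Real.arccos (inner ℝ (aggregate α θA θD) θD : ℝ)) := by
  set v : EuclideanSpace ℝ (Fin 2) := α • θD + (1 - α) • θA with hv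
  set n : ℝ := ‖v‖ with hn
  -- positivity of n
  have hαD : ‖α • θD‖ = α := by
    rw [norm_smul, hD, Real.norm_eq_abs, abs_of_pos hα, mul_one]
  have hαA : ‖(1 - α) • θA‖ = 1 - α := by
    rw [norm_smul, hA, Real.norm_eq_abs, abs_of_pos (by linarith), mul_one]
  have hnpos : 0 < n := by
    have h1 : (1 - α : ℝ) = ‖v - α • θD‖ := by
      rw [show v - α • θD = (1 - α) • θA by rw [hv]; abel, hαA]
    have h2 : ‖v - α • θD‖ ≤ n + α := by
      calc ‖v - α • θD‖ ≤ ‖v‖ + ‖α • θD‖ := norm_sub_le _ _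
        _ = n + α := by rw [hαD]
    linarith
  -- coordinates
  set a0 : ℝ := θA 0 with ha0; set a1 : ℝ := θA 1 with ha1
  set d0 : ℝ := θD 0 with hd0; set d1 : ℝ := θD 1 with hd1
  obtain ⟨v0, hv0⟩ : ∃ x : ℝ, v 0 = x := ⟨_, rfl⟩
  obtain ⟨v1, hv1⟩ : ∃ x : ℝ, v 1 = x := ⟨_, rfl⟩
  have hvv0 : v0 = α * d0 + (1 - α) * a0 := by
    rw [← hv0, hv]; simp [ha0, hd0]
  have hvv1 : v1 = α * d1 + (1 - α) * a1 := by
    rw [← hv1, hv]; simp [ha1, hd1]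
  have hA2 : a0 ^ 2 + a1 ^ 2 = 1 := by
    have h := hA
    rw [EuclideanSpace.norm_eq, Fin.sum_univ_two] at h
    have h1 : Real.sqrt (‖θA 0‖ ^ 2 + ‖θA 1‖ ^ 2) ^ 2 = 1 := by rw [h]; norm_num
    rw [Real.sq_sqrt (by positivity)] at h1
    simpa [Real.norm_eq_abs, sq_abs, ← ha0, ← ha1] using h1
  have hD2 : d0 ^ 2 + d1 ^ 2 = 1 := by
    have h := hD
    rw [EuclideanSpace.norm_eq, Fin.sum_univ_two] at h
    have h1 : Real.sqrt (‖θD 0‖ ^ 2 + ‖θD 1‖ ^ 2) ^ 2 = 1 := by rw [h]; norm_num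
    rw [Real.sq_sqrt (by positivity)] at h1
    simpa [Real.norm_eq_abs, sq_abs, ← hd0, ← hd1] using h1
  have hnsq : n ^ 2 = v0 ^ 2 + v1 ^ 2 := by
    rw [hn, EuclideanSpace.norm_eq, Fin.sum_univ_two,
      Real.sq_sqrt (by positivity)]
    simp [Real.norm_eq_abs, sq_abs, hv0, hv1]
  -- inner products
  have hinnA : (inner ℝ (aggregate α θA θD) θA : ℝ) = n⁻¹ * (v0 * a0 + v1 * a1) := by
    rw [aggregate, ← hv, ← hn, real_inner_smul_left]
    congr 1
    rw [PiLp.inner_apply, Fin.sum_univ_two]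
    simp [RCLike.inner_apply, ← ha0, ← ha1, hv0, hv1, mul_comm]
  have hinnD : (inner ℝ (aggregate α θA θD) θD : ℝ) = n⁻¹ * (v0 * d0 + v1 * d1) := by
    rw [aggregate, ← hv, ← hn, real_inner_smul_left]
    congr 1
    rw [PiLp.inner_apply, Fin.sum_univ_two]
    simp [RCLike.inner_apply, ← hd0, ← hd1, hv0, hv1, mul_comm]
  set c : ℝ := d0 * a1 - d1 * a0 with hc
  have hn0 : n ≠ 0 := ne_of_gt hnpos
  -- the two sines
  have hsA : Real.sin (Real.arccos (inner ℝ (aggregate α θA θD) θA : ℝ)) = α * |c| / n := by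
    rw [hinnA, Real.sin_arccos]
    have hcross : n ^ 2 - (v0 * a0 + v1 * a1) ^ 2 = (α * |c|) ^ 2 := by
      rw [hnsq, hvv0, hvv1, mul_pow, sq_abs, hc]
      linear_combination (-((α * d0 + (1 - α) * a0) ^ 2 + (α * d1 + (1 - α) * a1) ^ 2)) * hA2
    have key : 1 - (n⁻¹ * (v0 * a0 + v1 * a1)) ^ 2 = (α * |c| / n) ^ 2 := by
      rw [div_pow, ← hcross]
      field_simp
    rw [key, Real.sqrt_sq (by positivity)]
  have hsD : Real.sin (Real.arccos (inner ℝ (aggregate α θA θD) θD : ℝ)) = (1 - α) * |c| / n := by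
    rw [hinnD, Real.sin_arccos]
    have hcross : n ^ 2 - (v0 * d0 + v1 * d1) ^ 2 = ((1 - α) * |c|) ^ 2 := by
      rw [hnsq, hvv0, hvv1, mul_pow, sq_abs, hc]
      linear_combination (-((α * d0 + (1 - α) * a0) ^ 2 + (α * d1 + (1 - α) * a1) ^ 2)) * hD2
    have key : 1 - (n⁻¹ * (v0 * d0 + v1 * d1)) ^ 2 = ((1 - α) * |c| / n) ^ 2 := by
      rw [div_pow, ← hcross]
      field_simp
    rw [key, Real.sqrt_sq (div_nonneg (mul_nonneg (by linarith) (abs_nonneg _)) hnpos.le)]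
  rw [hsA, hsD]
  ring
end

section
/- Let 0 < α < 1/2 and let θ*_D be a unit vector in ℝ². For every unit vector θ_A in ℝ² there exists a unit vector θ_D in ℝ² such that arccos(⟪θ_C(θ_A, θ_D), θ*_D⟫) ≤ π − arcsin(α/(1−α)). -/
open Real

set_option maxHeartbeats 1000000 in
/-- Lemma 4: whatever unit vector the majority reports, the minority can report a unit vector
bringing the aggregate within angle `π − arcsin(α/(1−α))` of its true preference `θ*_D`. -/
theorem stmt_9 (α : ℝ) (hα : 0 < α) (hα' : α < 1 / 2)
    (θDstar : EuclideanSpace ℝ (Fin 2)) (hDs : ‖θDstar‖ = 1) :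
    ∀ θA : EuclideanSpace ℝ (Fin 2), ‖θA‖ = 1 →
      ∃ θD : EuclideanSpace ℝ (Fin 2), ‖θD‖ = 1 ∧
        Real.arccos (inner ℝ (aggregate α θA θD) θDstar : ℝ) ≤
          Real.pi - Real.arcsin (α / (1 - α)) := by
  intro θA hA
  have hβpos : (0:ℝ) < 1 - α := by linarith
  have hβne : (1 - α) ≠ 0 := ne_of_gt hβpos
  have hαβ : α < 1 - α := by linarith
  have hN2 : (0:ℝ) < (1 - α)^2 - α^2 := by nlinarith
  set N : ℝ := Real.sqrt ((1 - α)^2 - α^2) with hNdef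
  have hNpos : 0 < N := Real.sqrt_pos.mpr hN2
  have hNsq : N^2 = (1 - α)^2 - α^2 := Real.sq_sqrt hN2.le
  clear_value N
  -- coordinates
  have hA2 : θA 0 ^ 2 + θA 1 ^ 2 = 1 := by
    rw [EuclideanSpace.norm_eq] at hA
    have := Real.sqrt_eq_one.mp (by simpa [Fin.sum_univ_two, sq_abs] using hA)
    simpa using this
  have hD2 : θDstar 0 ^ 2 + θDstar 1 ^ 2 = 1 := by
    rw [EuclideanSpace.norm_eq] at hDs
    have := Real.sqrt_eq_one.mp (by simpa [Fin.sum_univ_two, sq_abs] using hDs)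
    simpa using this
  set P : EuclideanSpace ℝ (Fin 2) :=
    (WithLp.equiv 2 (Fin 2 → ℝ)).symm ![-θA 1, θA 0] with hPdef
  have hP0 : P 0 = -θA 1 := rfl
  have hP1 : P 1 = θA 0 := rfl
  set t : ℝ := θA 0 * θDstar 0 + θA 1 * θDstar 1 with htdef
  set u : ℝ := -θA 1 * θDstar 0 + θA 0 * θDstar 1 with hudef
  have htu : t^2 + u^2 = 1 := by
    rw [htdef, hudef]; nlinarith [hA2, hD2, sq_nonneg (θA 0 * θDstar 0)]
  have ht1 : -1 ≤ t := by nlinarith [sq_nonneg u, sq_nonneg (t+1)]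
  clear_value t u
  set s : ℝ := if 0 ≤ u then N / (1 - α) else -(N / (1 - α)) with hsdef
  have hs2 : s^2 = N^2 / (1 - α)^2 := by
    rw [hsdef]; split
    · rw [div_pow]
    · rw [neg_sq, div_pow]
  have hsu : 0 ≤ s * u := by
    rw [hsdef]; split
    · rename_i h; exact mul_nonneg (div_pos hNpos hβpos).le h
    · rename_i h
      have hu : u ≤ 0 := le_of_not_ge h
      have h2 : 0 ≤ (N / (1 - α)) * (-u) :=
        mul_nonneg (div_pos hNpos hβpos).le (neg_nonneg.mpr hu)
      linarith [h2, neg_mul (N / (1 - α)) u, mul_neg (N / (1 - α)) u]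
  clear_value s
  -- the minority's report
  set θD : EuclideanSpace ℝ (Fin 2) := (-(α/(1-α))) • θA + s • P with hDdef
  have hD0 : θD 0 = -(α/(1-α)) * θA 0 + s * (-θA 1) := by
    rw [hDdef]; simp [hP0]
  have hD1 : θD 1 = -(α/(1-α)) * θA 1 + s * θA 0 := by
    rw [hDdef]; simp [hP1]
  have hqs : (α/(1-α))^2 + s^2 = 1 := by
    rw [hs2, hNsq]; field_simp; ring
  have hDnorm : ‖θD‖ = 1 := by
    rw [EuclideanSpace.norm_eq]
    rw [Real.sqrt_eq_one]
    simp only [Fin.sum_univ_two, Real.norm_eq_abs, sq_abs, hD0, hD1]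
    linear_combination (θA 0 ^ 2 + θA 1 ^ 2) * hqs + hA2
  refine ⟨θD, hDnorm, ?_⟩
  -- the unnormalized aggregate
  set v : EuclideanSpace ℝ (Fin 2) := α • θD + (1 - α) • θA with hvdef
  have hv0 : v 0 = α * θD 0 + (1-α) * θA 0 := by rw [hvdef]; simp
  have hv1 : v 1 = α * θD 1 + (1-α) * θA 1 := by rw [hvdef]; simp
  have hvnorm : ‖v‖ = N := by
    rw [EuclideanSpace.norm_eq, hNdef]
    congr 1
    simp only [Fin.sum_univ_two, Real.norm_eq_abs, sq_abs, hv0, hv1, hD0, hD1]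
    have hkey2 : ((1-α) - α*(α/(1-α)))^2 + α^2*s^2 = (1-α)^2 - α^2 := by
      rw [hs2, hNsq]; field_simp; ring
    linear_combination (θA 0 ^ 2 + θA 1 ^ 2) * hkey2 + ((1-α)^2 - α^2) * hA2
  have hinner_v : (inner ℝ v θDstar : ℝ) = (N^2/(1-α)) * t + α * (s * u) := by
    simp only [PiLp.inner_apply, RCLike.inner_apply, Fin.sum_univ_two, conj_trivial,
      hv0, hv1, hD0, hD1, hNsq]
    rw [htdef, hudef]
    field_simp
    ring
  have hinner : (inner ℝ (aggregate α θA θD) θDstar : ℝ) = N⁻¹ * ((N^2/(1-α)) * t + α * (s * u)) := by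
    rw [aggregate, ← hvdef, hvnorm, ← hinner_v]
    exact real_inner_smul_left v θDstar N⁻¹
  -- lower bound on the inner product
  have hz : -(N/(1-α)) ≤ (inner ℝ (aggregate α θA θD) θDstar : ℝ) := by
    rw [hinner]
    have h1 : -(N^2/(1-α)) ≤ (N^2/(1-α)) * t + α * (s * u) := by
      have : (N^2/(1-α)) * (-1) ≤ (N^2/(1-α)) * t :=
        mul_le_mul_of_nonneg_left ht1 (by positivity)
      linarith [mul_nonneg hα.le hsu]
    have h2 : N⁻¹ * (-(N^2/(1-α))) ≤ N⁻¹ * ((N^2/(1-α)) * t + α * (s * u)) :=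
      mul_le_mul_of_nonneg_left h1 (by positivity)
    calc -(N/(1-α)) = N⁻¹ * (-(N^2/(1-α))) := by field_simp
    _ ≤ _ := h2
  -- convert to the arccos bound
  have hx0 : (0:ℝ) ≤ α / (1 - α) := by positivity
  have hx1 : α / (1 - α) ≤ 1 := by
    rw [div_le_one hβpos]; linarith
  have hkey : Real.sqrt (1 - (α/(1-α))^2) = N / (1 - α) := by
    have : 1 - (α/(1-α))^2 = (N/(1-α))^2 := by
      rw [div_pow, div_pow, hNsq]; field_simp
    rw [this, Real.sqrt_sq (by positivity)]
  have harccos : Real.arccos (-(N/(1-α))) = Real.pi - Real.arcsin (α / (1 - α)) := by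
    rw [Real.arccos_neg, ← hkey, ← Real.cos_arcsin,
      Real.arccos_cos (Real.arcsin_nonneg.mpr hx0)
        (le_trans (Real.arcsin_le_pi_div_two _) (by linarith [Real.pi_pos]))]
  rw [← harccos]
  -- arccos is antitone
  rw [Real.arccos, Real.arccos, sub_le_sub_iff_left]
  exact Real.monotone_arcsin hz
end

section
/- Let d ≥ 2, let 0 < α < 1/2, and let θ*_A, θ*_D be unit vectors in ℝ^d (Euclidean space) with θ*_A ≠ θ*_D. Consider the game in which each player reports a unit vector of ℝ^d, the aggregate is θ_C(θ_A, θ_D) = (α θ_D + (1−α) θ_A)/‖α θ_D + (1−α) θ_A‖, and the payoffs are u_A(θ_A, θ_D) = ⟪θ_C(θ_A, θ_D), θ*_A⟫ and u_D(θ_A, θ_D) = ⟪θ_C(θ_A, θ_D), θ*_D⟫. If (θ'_A, θ'_D) is a pure strategy Nash equilibrium of this game, then both θ'_A and θ'_D lie in the linear span of {θ*_A, θ*_D}. -/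
open Real RealInnerProductSpace

/-- The aggregate vector `(α θ_D + (1−α) θ_A)/‖α θ_D + (1−α) θ_A‖` in `ℝ^d`. -/
noncomputable def aggregateD {d : ℕ} (α : ℝ) (θA θD : EuclideanSpace ℝ (Fin d)) :
    EuclideanSpace ℝ (Fin d) :=
  (‖α • θD + (1 - α) • θA‖)⁻¹ • (α • θD + (1 - α) • θA)

private lemma aux_norm_eq_one {E : Type*} [NormedAddCommGroup E] (x : E) (h : ‖x‖^2 = 1) :
    ‖x‖ = 1 := by
  have h2 : (‖x‖ - 1) * (‖x‖ + 1) = 0 := by ring_nf; nlinarith [h]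
  rcases mul_eq_zero.mp h2 with h3 | h3
  · linarith
  · linarith [norm_nonneg x]

private lemma aux_norm_sq_ortho {d : ℕ} (x y : EuclideanSpace ℝ (Fin d)) (a b : ℝ)
    (hx : ‖x‖ = 1) (hy : ‖y‖ = 1) (hxy : (inner ℝ x y : ℝ) = 0) :
    ‖a • x + b • y‖^2 = a^2 + b^2 := by
  rw [norm_add_sq_real, norm_smul, norm_smul, real_inner_smul_left, real_inner_smul_right,
    hxy, hx, hy, Real.norm_eq_abs, Real.norm_eq_abs]
  simp [sq_abs]


private lemma aux_sin_bound (s : ℝ) (h0 : 0 < s) (h1 : s ≤ 1) : s/2 ≤ Real.sin s := by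
  have h2 := Real.sin_gt_sub_cube h0
  have h3 : s^2 ≤ 1 := by nlinarith
  have h4 : s^3 ≤ s := by nlinarith [mul_le_mul_of_nonneg_left h3 h0.le]
  linarith

private lemma aux_M_bounds (M t β e : ℝ) (he : 0 ≤ e) (hM : 0 ≤ M)
    (hsq : M^2 = t^2 + 2*t*β + e^2) (hβ : |β| ≤ e) (hhalf : e ≤ t/2) (ht : 0 < t) :
    t + β ≤ M ∧ t*(M - (t+β)) ≤ e^2 := by
  have hβ' := abs_le.mp hβ
  have h1 : t + β ≤ M := by
    nlinarith [hβ'.1, hβ'.2, sq_nonneg (M - (t+β)), sq_nonneg (M + (t+β))]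
  refine ⟨h1, ?_⟩
  have h2 : 0 ≤ M + β := by linarith [hβ'.1]
  have h3 : 0 ≤ M - (t+β) := by linarith
  nlinarith [mul_nonneg h2 h3, sq_nonneg β]

private lemma aux_I_bound (t ρ M β e DD I : ℝ) (ht : 0 < t) (hρ : ρ ≤ 1)
    (hNs : t*ρ + DD ≤ ρ*M) (hI : I = DD - ρ*β) (hMg : t + β ≤ M)
    (hMb : t*(M-(t+β)) ≤ e^2) : t*I ≤ e^2 := by
  nlinarith [mul_le_mul_of_nonneg_left hNs ht.le,
    mul_nonneg (mul_nonneg (sub_nonneg.2 hρ) ht.le) (sub_nonneg.2 hMg)]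

private lemma aux_contra (t α s wn cD sn cs I : ℝ)
    (ht : 0 < t) (hα : 0 < α) (hs : 0 < s) (hw : 0 < wn)
    (hIle : t*I ≤ α^2*(2-2*cs)) (hcs : 2-2*cs ≤ s^2) (hcs1 : cs ≤ 1)
    (hIeval : I = α*(cs-1)*cD + α*sn*wn)
    (hcD : |cD| ≤ 2) (hsin : s/2 ≤ sn) (hsE : s*(8*(t+α)) ≤ wn*t) : False := by
  have hcD' := abs_le.mp hcD
  have Fb : (cs - 1) * cD ≥ -(2 - 2*cs) := by nlinarith [hcD'.1, hcD'.2]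
  have F1 : t*α*sn*wn ≤ α^2*s^2 + t*α*(2-2*cs) := by
    nlinarith [mul_le_mul_of_nonneg_left Fb (by positivity : (0:ℝ) ≤ t*α),
      mul_le_mul_of_nonneg_left hcs (sq_nonneg α)]
  have F2 : t*α*(s/2)*wn ≤ t*α*sn*wn :=
    mul_le_mul_of_nonneg_right
      (mul_le_mul_of_nonneg_left hsin (by positivity : (0:ℝ) ≤ t*α)) hw.le
  have F4 : t*α*s*wn ≤ 2*α^2*s^2 + 2*t*α*s^2 := by
    nlinarith [F1, F2, mul_le_mul_of_nonneg_left hcs (by positivity : (0:ℝ) ≤ t*α)]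
  have F5 : α*s*(s*(8*(t+α))) ≤ α*s*(wn*t) :=
    mul_le_mul_of_nonneg_left hsE (by positivity)
  nlinarith [F4, F5, mul_pos (mul_pos (mul_pos ht hα) hs) hw]

set_option maxHeartbeats 1000000 in
/-- Appendix C proposition: any pure strategy Nash equilibrium of the `d`-dimensional game
lies in the linear span of the true preference vectors `{θ*_A, θ*_D}`. -/
theorem stmt_16 (d : ℕ) (hd : 2 ≤ d) (α : ℝ) (hα : 0 < α) (hα' : α < 1 / 2)
    (θAstar θDstar θA' θD' : EuclideanSpace ℝ (Fin d))
    (hAs : ‖θAstar‖ = 1) (hDs : ‖θDstar‖ = 1) (hne : θAstar ≠ θDstar)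
    (hA' : ‖θA'‖ = 1) (hD' : ‖θD'‖ = 1)
    (hNashA : ∀ θA : EuclideanSpace ℝ (Fin d), ‖θA‖ = 1 →
      (inner ℝ (aggregateD α θA θD') θAstar : ℝ) ≤ (inner ℝ (aggregateD α θA' θD') θAstar : ℝ))
    (hNashD : ∀ θD : EuclideanSpace ℝ (Fin d), ‖θD‖ = 1 →
      (inner ℝ (aggregateD α θA' θD) θDstar : ℝ) ≤ (inner ℝ (aggregateD α θA' θD') θDstar : ℝ)) :
    θA' ∈ Submodule.span ℝ ({θAstar, θDstar} : Set (EuclideanSpace ℝ (Fin d))) ∧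
    θD' ∈ Submodule.span ℝ ({θAstar, θDstar} : Set (EuclideanSpace ℝ (Fin d))) := by
  have hα1 : (0:ℝ) < 1 - α := by linarith
  have hα2 : (0:ℝ) < 1 - 2*α := by linarith
  -- generic norm lower bound
  have key_norm : ∀ θA θD : EuclideanSpace ℝ (Fin d), ‖θA‖ = 1 → ‖θD‖ = 1 →
      1 - 2*α ≤ ‖α • θD + (1 - α) • θA‖ := by
    intro θA θD h1 h2
    have h3 : ‖(1-α) • θA‖ ≤ ‖α • θD + (1-α) • θA‖ + ‖α • θD‖ := by
      have := norm_sub_le (α • θD + (1-α) • θA) (α • θD)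
      simpa using this
    rw [norm_smul, norm_smul, h1, h2, Real.norm_eq_abs, Real.norm_eq_abs,
      abs_of_pos hα, abs_of_pos hα1] at h3
    linarith
  have hv_pos : 0 < ‖α • θD' + (1 - α) • θA'‖ :=
    lt_of_lt_of_le hα2 (key_norm θA' θD' hA' hD')
  -- existence of a best response achieving payoff 1 for A
  obtain ⟨t₀, ht₀mem, ht₀⟩ : ∃ t₀ ∈ Set.Icc (0:ℝ) 1, ‖t₀ • θAstar - α • θD'‖ = 1 - α := by
    have hc : ContinuousOn (fun t : ℝ => ‖t • θAstar - α • θD'‖) (Set.Icc 0 1) := by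
      fun_prop
    have h0 : ‖(0:ℝ) • θAstar - α • θD'‖ = α := by
      simp [norm_smul, hD', abs_of_pos hα]
    have h1 : 1 - α ≤ ‖(1:ℝ) • θAstar - α • θD'‖ := by
      have h2 := norm_sub_norm_le ((1:ℝ) • θAstar) (α • θD')
      rw [norm_smul, norm_smul, hAs, hD', Real.norm_eq_abs, Real.norm_eq_abs,
        abs_of_pos hα] at h2
      simpa using h2
    have hmem : (1 - α) ∈ Set.Icc (‖(0:ℝ) • θAstar - α • θD'‖) (‖(1:ℝ) • θAstar - α • θD'‖) := by
      rw [h0]; exact ⟨by linarith, h1⟩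
    obtain ⟨t₀, ht₀, h⟩ := intermediate_value_Icc (by norm_num : (0:ℝ) ≤ 1) hc hmem
    exact ⟨t₀, ht₀, h⟩
  have ht₀pos : 0 < t₀ := by
    rcases eq_or_lt_of_le ht₀mem.1 with h | h
    · exfalso
      rw [← h] at ht₀
      rw [zero_smul, zero_sub, norm_neg, norm_smul, hD', Real.norm_eq_abs, abs_of_pos hα] at ht₀
      simp at ht₀; linarith
    · exact h
  set θA₀ : EuclideanSpace ℝ (Fin d) := (1 - α)⁻¹ • (t₀ • θAstar - α • θD') with hθA₀
  have hθA₀norm : ‖θA₀‖ = 1 := by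
    rw [hθA₀, norm_smul, ht₀, Real.norm_eq_abs, abs_of_pos (inv_pos.2 hα1),
      inv_mul_cancel₀ hα1.ne']
  have hsum : α • θD' + (1 - α) • θA₀ = t₀ • θAstar := by
    rw [hθA₀, smul_smul, mul_inv_cancel₀ hα1.ne', one_smul]
    abel
  have hagg₀ : aggregateD α θA₀ θD' = θAstar := by
    rw [aggregateD, hsum, norm_smul, hAs, Real.norm_eq_abs, abs_of_pos ht₀pos,
      mul_one, smul_smul, inv_mul_cancel₀ ht₀pos.ne', one_smul]
  have hval : (1:ℝ) ≤ ⟪aggregateD α θA' θD', θAstar⟫ := by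
    have h := hNashA θA₀ hθA₀norm
    rw [hagg₀, real_inner_self_eq_norm_mul_norm, hAs, one_mul] at h
    exact h
  have haggnorm : ‖aggregateD α θA' θD'‖ = 1 := by
    rw [aggregateD, norm_smul, Real.norm_eq_abs, abs_of_pos (inv_pos.2 hv_pos),
      inv_mul_cancel₀ hv_pos.ne']
  have hagg : aggregateD α θA' θD' = θAstar := by
    have hle := real_inner_le_norm (aggregateD α θA' θD') θAstar
    rw [haggnorm, hAs, one_mul] at hle
    have heq : ⟪aggregateD α θA' θD', θAstar⟫ = ‖aggregateD α θA' θD'‖ * ‖θAstar‖ := by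
      rw [haggnorm, hAs]; linarith
    have h2 := inner_eq_norm_mul_iff_real.mp heq
    rw [hAs, haggnorm, one_smul, one_smul] at h2
    exact h2
  -- the aggregate at equilibrium equals θAstar
  set t : ℝ := ‖α • θD' + (1 - α) • θA'‖ with htdef
  have ht_pos : 0 < t := hv_pos
  have hveq : α • θD' + (1 - α) • θA' = t • θAstar := by
    have h : (t⁻¹ : ℝ) • (α • θD' + (1 - α) • θA') = θAstar := by
      rw [← hagg, aggregateD, ← htdef]
    calc α • θD' + (1 - α) • θA'
        = t • t⁻¹ • (α • θD' + (1-α) • θA') := by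
          rw [smul_smul, mul_inv_cancel₀ ht_pos.ne', one_smul]
      _ = t • θAstar := by rw [h]
  have ht_le : t ≤ 1 := by
    have h1 : ‖α • θD'‖ = α := by
      rw [norm_smul, hD', Real.norm_eq_abs, abs_of_pos hα, mul_one]
    have h2 : ‖(1-α) • θA'‖ = 1 - α := by
      rw [norm_smul, hA', Real.norm_eq_abs, abs_of_pos hα1, mul_one]
    calc t ≤ ‖α • θD'‖ + ‖(1-α) • θA'‖ := norm_add_le _ _
      _ = 1 := by rw [h1, h2]; ring
  have hA'eq : (1 - α) • θA' = t • θAstar - α • θD' := by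
    rw [← hveq]; abel
  set ρ : ℝ := ⟪θAstar, θDstar⟫ with hρdef
  have hρ_abs : |ρ| ≤ 1 := by
    have h := abs_real_inner_le_norm θAstar θDstar
    rwa [hAs, hDs, one_mul] at h
  have hρ_lt : ρ < 1 := (inner_lt_one_iff_real_of_norm_eq_one hAs hDs).mpr hne
  -- reformulated Nash condition for D
  have hN : ∀ θD : EuclideanSpace ℝ (Fin d), ‖θD‖ = 1 →
      ⟪α • θD + (1 - α) • θA', θDstar⟫ ≤ ρ * ‖α • θD + (1 - α) • θA'‖ := by
    intro θD h1
    have hm_pos : 0 < ‖α • θD + (1 - α) • θA'‖ :=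
      lt_of_lt_of_le hα2 (key_norm θA' θD hA' h1)
    have h2 := hNashD θD h1
    rw [hagg] at h2
    rw [aggregateD, real_inner_smul_left] at h2
    have h3 := mul_le_mul_of_nonneg_left h2 (le_of_lt hm_pos)
    rw [← mul_assoc, mul_inv_cancel₀ hm_pos.ne', one_mul] at h3
    rw [← hρdef] at h3
    linarith [h3]
  have hAmem : θAstar ∈ Submodule.span ℝ ({θAstar, θDstar} : Set (EuclideanSpace ℝ (Fin d))) :=
    Submodule.subset_span (by simp)
  have hDmem : θDstar ∈ Submodule.span ℝ ({θAstar, θDstar} : Set (EuclideanSpace ℝ (Fin d))) :=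
    Submodule.subset_span (by simp)
  have hθD'mem : θD' ∈ Submodule.span ℝ ({θAstar, θDstar} : Set (EuclideanSpace ℝ (Fin d))) := by
    set z₀ : EuclideanSpace ℝ (Fin d) := θDstar - ρ • θAstar with hz₀def
    by_cases hz₀ : z₀ = 0
    · -- degenerate case θDstar = -θAstar : no equilibrium, contradiction
      exfalso
      -- a unit vector orthogonal to θAstar
      obtain ⟨x, hx_norm, hx_orth⟩ : ∃ x : EuclideanSpace ℝ (Fin d), ‖x‖ = 1 ∧ ⟪θAstar, x⟫ = 0 := by
        have hAne : θAstar ≠ 0 := by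
          intro h; rw [h, norm_zero] at hAs; norm_num at hAs
        have hspan_ne : (ℝ ∙ θAstar) ≠ (⊤ : Submodule ℝ (EuclideanSpace ℝ (Fin d))) := by
          intro h
          have h1 : Module.finrank ℝ (ℝ ∙ θAstar : Submodule ℝ (EuclideanSpace ℝ (Fin d))) = 1 :=
            finrank_span_singleton hAne
          rw [h, finrank_top, finrank_euclideanSpace_fin] at h1
          omega
        have horth_ne : ((ℝ ∙ θAstar)ᗮ : Submodule ℝ (EuclideanSpace ℝ (Fin d))) ≠ ⊥ :=
          fun h => hspan_ne (Submodule.orthogonal_eq_bot_iff.mp h)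
        obtain ⟨y, hy_mem, hy_ne⟩ := Submodule.exists_mem_ne_zero_of_ne_bot horth_ne
        refine ⟨‖y‖⁻¹ • y, ?_, ?_⟩
        · rw [norm_smul, Real.norm_eq_abs, abs_of_pos (inv_pos.2 (norm_pos_iff.2 hy_ne)),
            inv_mul_cancel₀ (norm_ne_zero_iff.2 hy_ne)]
        · rw [real_inner_smul_right,
            Submodule.inner_right_of_mem_orthogonal (Submodule.mem_span_singleton_self θAstar) hy_mem,
            mul_zero]
      have hθD_eq : θDstar = ρ • θAstar := by rwa [sub_eq_zero] at hz₀
      have hρ_eq : ρ = -1 := by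
        have h2 : (1:ℝ) = |ρ| := by
          rw [← hDs, hθD_eq, norm_smul, hAs, mul_one, Real.norm_eq_abs]
        rcases abs_cases ρ with ⟨h3, _⟩ | ⟨h3, _⟩ <;> linarith
      have hθD_eq' : θDstar = -θAstar := by rw [hθD_eq, hρ_eq]; module
      have key : ∀ y : EuclideanSpace ℝ (Fin d), ‖y‖ = 1 →
          α • y + (1-α) • θA' = ‖α • y + (1-α) • θA'‖ • θAstar := by
        intro y hy
        have hm_pos : 0 < ‖α • y + (1-α) • θA'‖ :=
          lt_of_lt_of_le hα2 (key_norm θA' y hA' hy)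
        have h1 := hN y hy
        rw [hρ_eq, hθD_eq', inner_neg_right] at h1
        have h3 : ‖α • y + (1-α) • θA'‖ * ‖θAstar‖ ≤ ⟪α • y + (1-α) • θA', θAstar⟫ := by
          rw [hAs, mul_one]; linarith
        have h4 := real_inner_le_norm (α • y + (1-α) • θA') θAstar
        have h5 : ⟪α • y + (1-α) • θA', θAstar⟫ = ‖α • y + (1-α) • θA'‖ * ‖θAstar‖ :=
          le_antisymm h4 h3
        have h6 := inner_eq_norm_mul_iff_real.mp h5
        rw [hAs, one_smul] at h6
        exact h6
      have k1 := key x hx_norm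
      have k2 := key (-x) (by rw [norm_neg, hx_norm])
      have h7 : (2*α) • x = ‖α • x + (1-α) • θA'‖ • θAstar
          - ‖α • (-x) + (1-α) • θA'‖ • θAstar := by
        rw [← k1, ← k2]; module
      have h8 : ⟪x, (2*α) • x⟫ = ⟪x, ‖α • x + (1-α) • θA'‖ • θAstar
          - ‖α • (-x) + (1-α) • θA'‖ • θAstar⟫ := by rw [← h7]
      have hx_orth' : ⟪x, θAstar⟫ = 0 := by rw [real_inner_comm]; exact hx_orth
      rw [real_inner_smul_right, real_inner_self_eq_norm_mul_norm, hx_norm, inner_sub_right,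
        real_inner_smul_right, real_inner_smul_right, hx_orth'] at h8
      simp at h8
      linarith
    · -- z₀ ≠ 0
      set c : ℝ := ⟪z₀, θD'⟫ with hcdef
      set w : EuclideanSpace ℝ (Fin d) := z₀ - c • θD' with hwdef
      by_cases hw : w = 0
      · -- θD' is parallel to z₀
        have h0 : z₀ = c • θD' := by
          have h1 := hw
          rw [hwdef, sub_eq_zero] at h1
          exact h1
        have hc_ne : c ≠ 0 := by
          intro hc
          rw [hc, zero_smul] at h0
          exact hz₀ h0
        have h2 : θD' = c⁻¹ • z₀ := by
          rw [h0, smul_smul, inv_mul_cancel₀ hc_ne, one_smul]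
        rw [h2, hz₀def]
        exact Submodule.smul_mem _ _ (Submodule.sub_mem _ hDmem (Submodule.smul_mem _ _ hAmem))
      · exfalso
        have hw_pos : 0 < ‖w‖ := norm_pos_iff.2 hw
        have hwd : ⟪w, θD'⟫ = 0 := by
          rw [hwdef, inner_sub_left, real_inner_smul_left, real_inner_self_eq_norm_mul_norm, hD',
            hcdef]
          ring
        have hwz : ⟪w, z₀⟫ = ‖w‖^2 := by
          have hz : z₀ = w + c • θD' := by rw [hwdef]; module
          rw [hz, inner_add_right, real_inner_smul_right, hwd, mul_zero, add_zero,
            real_inner_self_eq_norm_mul_norm]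
          ring
        set wh : EuclideanSpace ℝ (Fin d) := ‖w‖⁻¹ • w with hwhdef
        have hwhnorm : ‖wh‖ = 1 := by
          rw [hwhdef, norm_smul, Real.norm_eq_abs, abs_of_pos (inv_pos.2 hw_pos),
            inv_mul_cancel₀ hw_pos.ne']
        have hwhd : ⟪wh, θD'⟫ = 0 := by
          rw [hwhdef, real_inner_smul_left, hwd, mul_zero]
        have hwhz : ⟪wh, z₀⟫ = ‖w‖ := by
          rw [hwhdef, real_inner_smul_left, hwz, sq, ← mul_assoc,
            inv_mul_cancel₀ hw_pos.ne', one_mul]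
        -- choice of the perturbation parameter
        set s : ℝ := min 1 (min (t/(2*α)) (‖w‖*t/(8*(t+α)))) with hsdef
        have hs_pos : 0 < s := by
          apply lt_min (by norm_num)
          exact lt_min (by positivity) (by positivity)
        have hs1 : s ≤ 1 := min_le_left _ _
        have hs_le2 : s ≤ t/(2*α) := le_trans (min_le_right _ _) (min_le_left _ _)
        have hs_le3 : s ≤ ‖w‖*t/(8*(t+α)) := le_trans (min_le_right _ _) (min_le_right _ _)
        have hs2 : α * s ≤ t/2 := by
          have h1 : s * (2*α) ≤ t := (le_div_iff₀ (by positivity)).mp hs_le2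
          linarith [h1]
        have hsE : s * (8*(t+α)) ≤ ‖w‖ * t := (le_div_iff₀ (by positivity)).mp hs_le3
        -- the perturbed strategy
        set θs : EuclideanSpace ℝ (Fin d) := Real.cos s • θD' + Real.sin s • wh with hθsdef
        have hθs_norm : ‖θs‖ = 1 := by
          apply aux_norm_eq_one
          rw [hθsdef, aux_norm_sq_ortho θD' wh _ _ hD' hwhnorm (by rw [real_inner_comm]; exact hwhd)]
          exact Real.cos_sq_add_sin_sq s
        set δ : EuclideanSpace ℝ (Fin d) :=
          (α*(Real.cos s - 1)) • θD' + (α*Real.sin s) • wh with hδdef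
        have hmδ : α • θs + (1-α) • θA' = t • θAstar + δ := by
          rw [hA'eq, hθsdef, hδdef]; module
        have hδsq : ‖δ‖^2 = α^2*(2 - 2*Real.cos s) := by
          rw [hδdef, aux_norm_sq_ortho θD' wh _ _ hD' hwhnorm (by rw [real_inner_comm]; exact hwhd)]
          linear_combination α^2 * Real.sin_sq_add_cos_sq s
        have hcos : 2 - 2*Real.cos s ≤ s^2 := by
          have := Real.one_sub_sq_div_two_le_cos (x := s)
          linarith
        have hδ_le : ‖δ‖ ≤ α * s := by
          have h1 : ‖δ‖^2 ≤ (α*s)^2 := by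
            rw [hδsq, mul_pow]
            exact mul_le_mul_of_nonneg_left hcos (sq_nonneg α)
          exact (abs_le_of_sq_le_sq' h1 (le_of_lt (mul_pos hα hs_pos))).2
        have hδ_half : ‖δ‖ ≤ t/2 := le_trans hδ_le hs2
        set M : ℝ := ‖t • θAstar + δ‖ with hMdef
        set β : ℝ := ⟪θAstar, δ⟫ with hβdef
        have hM_sq : M^2 = t^2 + 2*t*β + ‖δ‖^2 := by
          rw [hMdef, norm_add_sq_real, norm_smul, real_inner_smul_left, hAs, Real.norm_eq_abs,
            abs_of_pos ht_pos, hβdef]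
          ring
        have hβ : |β| ≤ ‖δ‖ := by
          have h := abs_real_inner_le_norm θAstar δ
          rwa [hAs, one_mul] at h
        obtain ⟨hM_ge_b, hMb⟩ :=
          aux_M_bounds M t β ‖δ‖ (norm_nonneg δ) (norm_nonneg _) hM_sq hβ hδ_half ht_pos
        -- Nash inequality at the perturbed strategy
        have hNs := hN θs hθs_norm
        rw [hmδ] at hNs
        rw [inner_add_left, real_inner_smul_left, ← hρdef, ← hMdef] at hNs
        -- hNs : t * ρ + ⟪δ, θDstar⟫ ≤ ρ * M
        set I : ℝ := ⟪δ, z₀⟫ with hIdef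
        have hI_eq : I = ⟪δ, θDstar⟫ - ρ * β := by
          rw [hIdef, hz₀def, inner_sub_right, real_inner_smul_right, hβdef,
            real_inner_comm θAstar δ]
        have hI_le : t * I ≤ ‖δ‖^2 :=
          aux_I_bound t ρ M β ‖δ‖ ⟪δ, θDstar⟫ I ht_pos (le_of_abs_le hρ_abs) hNs hI_eq
            hM_ge_b hMb
        have hI_eval : I = α*(Real.cos s - 1)*⟪θD', z₀⟫ + α*Real.sin s*‖w‖ := by
          rw [hIdef, hδdef, inner_add_left, real_inner_smul_left, real_inner_smul_left, hwhz]
        have hcD : |⟪θD', z₀⟫| ≤ 2 := by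
          have h1 := abs_real_inner_le_norm θD' z₀
          rw [hD', one_mul] at h1
          have h2 : ‖z₀‖ ≤ 2 := by
            rw [hz₀def]
            have := norm_sub_le θDstar (ρ • θAstar)
            rw [norm_smul, hAs, hDs, Real.norm_eq_abs, mul_one] at this
            linarith [this, hρ_abs]
          linarith
        have hcD' := abs_le.mp hcD
        have hsin : s/2 ≤ Real.sin s := aux_sin_bound s hs_pos hs1
        have hIle' : t * I ≤ α^2*(2 - 2*Real.cos s) := by rw [← hδsq]; exact hI_le
        exact aux_contra t α s ‖w‖ ⟪θD', z₀⟫ (Real.sin s) (Real.cos s) I ht_pos hα hs_pos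
          hw_pos hIle' hcos (Real.cos_le_one s) hI_eval hcD hsin hsE
  have hθA'mem : θA' ∈ Submodule.span ℝ ({θAstar, θDstar} : Set (EuclideanSpace ℝ (Fin d))) := by
    have h1 : θA' = (1-α)⁻¹ • (t • θAstar - α • θD') := by
      rw [← hA'eq, smul_smul, inv_mul_cancel₀ hα1.ne', one_smul]
    rw [h1]
    exact Submodule.smul_mem _ _ (Submodule.sub_mem _ (Submodule.smul_mem _ _ hAmem)
      (Submodule.smul_mem _ _ hθD'mem))
  exact ⟨hθA'mem, hθD'mem⟩
end
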